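/- For nonnegative integers N and integers k with ν ∈ {0,1}, the generating function for partitions into distinct parts each at most 2N+ν with BG-rank equal to k is q^{2k²-k} (q²;q²)_{2N+ν} / ((q²;q²)_{N+⌈ν/2⌉-k} (q²;q²)_{N+k}). -/

import Mathlib

open Finset PowerSeries

/-- Number of cells of the Young diagram with (column - row) ≡ i (mod t). -/
def rCount (μ : YoungDiagram) (t : ℕ) (i : ZMod t) : ℕ :=
  (μ.cells.filter (fun c => ((c.2 : ZMod t) - (c.1 : ZMod t) = i))).card

/-- GBG-rank of a partition mod t: Σ_{i<t} r_i ω_t^i where ω_t = e^{2πi/t}. -/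
noncomputable def GBG (μ : YoungDiagram) (t : ℕ) : ℂ :=
  ∑ i ∈ Finset.range t, (rCount μ t (i : ZMod t) : ℂ) *
    Complex.exp (2 * (Real.pi : ℂ) * Complex.I * (i : ℂ) / (t : ℂ))

/-- Generating function (formal power series in q) counting Young diagrams of each size
satisfying the predicate P. -/
noncomputable def GF (P : YoungDiagram → Prop) : PowerSeries ℚ :=
  PowerSeries.mk fun n => (Nat.card {μ : YoungDiagram // μ.cells.card = n ∧ P μ} : ℚ)

/-- (q^s; q^s)_L  = ∏_{j=0}^{L-1} (1 - q^{s(j+1)}). -/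
noncomputable def qp (s L : ℕ) : PowerSeries ℚ :=
  ∏ j ∈ Finset.range L, (1 - (PowerSeries.X : PowerSeries ℚ) ^ (s * (j + 1)))

/-- 1/(q^s;q^s)_L with the convention that it is 0 for L < 0. -/
noncomputable def qpi (s : ℕ) (L : ℤ) : PowerSeries ℚ :=
  if 0 ≤ L then (qp s L.toNat)⁻¹ else 0

/-- Gaussian binomial coefficient [m choose n] in the variable q^s,
equal to 0 unless m ≥ n ≥ 0. -/
noncomputable def gbinom (s : ℕ) (m n : ℤ) : PowerSeries ℚ :=
  if 0 ≤ n ∧ n ≤ m then qp s m.toNat * (qp s n.toNat)⁻¹ * (qp s (m - n).toNat)⁻¹ else 0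

/-- (-q^s; q^{2s})_L = ∏_{j=0}^{L-1}(1 + q^{s(2j+1)}), with value 0 convention not needed
but defined as 0 for L < 0. -/
noncomputable def aqp (s : ℕ) (L : ℤ) : PowerSeries ℚ :=
  if 0 ≤ L then
    ∏ j ∈ Finset.range L.toNat, (1 + (PowerSeries.X : PowerSeries ℚ) ^ (s * (2 * j + 1)))
  else 0

/-- Multiplicity of the part m in the partition given by a Young diagram. -/
def mult (μ : YoungDiagram) (m : ℕ) : ℕ :=
  ((Finset.range (μ.colLen 0)).filter (fun j => μ.rowLen j = m)).card

/-- The Maya diagram / beta-set of a partition: the set {λ_j - j : j ≥ 1} ⊆ ℤ. -/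
def InS (μ : YoungDiagram) (x : ℤ) : Prop :=
  ∃ j : ℕ, (μ.rowLen j : ℤ) - (j + 1) = x

/-- `g` is the i-th component of the t-quotient of μ (Littlewood decomposition):
the Maya diagram of g is the i-th slice mod t of the Maya diagram of μ. -/
def QuotComp (t : ℕ) (i : ℕ) (μ g : YoungDiagram) : Prop :=
  ∀ m : ℤ, InS μ (t * m + i) ↔ InS g m

/-- μ is a t-core: its Young diagram has no rim hooks of length t, equivalently
its Maya diagram is closed under subtracting t. -/
def IsTCore (t : ℕ) (μ : YoungDiagram) : Prop :=
  ∀ x : ℤ, InS μ x → InS μ (x - t)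

/-- i-th component of the vector n⃗(μ,t):  r_i - r_{i+1} (indices mod t). -/
def nVec (μ : YoungDiagram) (t : ℕ) (i : ℕ) : ℤ :=
  (rCount μ t (i : ZMod t) : ℤ) - (rCount μ t ((i + 1 : ℕ) : ZMod t) : ℤ)

/-- `h` is the t-core of μ: h is a t-core with the same vector n⃗ as μ. -/
def TCoreOf (t : ℕ) (μ h : YoungDiagram) : Prop :=
  IsTCore t h ∧ ∀ i : ℕ, i < t → nVec h t i = nVec μ t i

lemma constCoeff_qp (L : ℕ) : constantCoeff (qp 2 L) = 1 := by
  unfold qp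
  rw [map_prod]
  apply Finset.prod_eq_one
  intro j _
  simp

lemma qp_ne_zero (L : ℕ) : qp 2 L ≠ 0 := by
  intro h
  have := constCoeff_qp L
  rw [h] at this
  simp at this

lemma qp_mul_inv (L : ℕ) : qp 2 L * (qp 2 L)⁻¹ = 1 :=
  PowerSeries.mul_inv_cancel _ (by rw [constCoeff_qp]; norm_num)

lemma qp_inv_mul (L : ℕ) : (qp 2 L)⁻¹ * qp 2 L = 1 := by
  rw [mul_comm]; exact qp_mul_inv L

lemma qp_one : qp 2 0 = 1 := by simp [qp]

lemma qp_zero_inv : (qp 2 0)⁻¹ = 1 := by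
  rw [qp_one]; simp

lemma qp_succ (L : ℕ) : qp 2 (L + 1) = qp 2 L * (1 - X ^ (2 * (L + 1))) := by
  unfold qp
  rw [Finset.prod_range_succ]

lemma qp_inv_pred (L : ℕ) :
    (qp 2 L)⁻¹ = (1 - X ^ (2 * (L + 1))) * (qp 2 (L + 1))⁻¹ := by
  symm
  calc (1 - X ^ (2 * (L + 1))) * (qp 2 (L + 1))⁻¹
      = ((qp 2 L)⁻¹ * qp 2 L) * ((1 - X ^ (2 * (L + 1))) * (qp 2 (L + 1))⁻¹) := by
        rw [qp_inv_mul, one_mul]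
    _ = (qp 2 L)⁻¹ * ((qp 2 L * (1 - X ^ (2 * (L + 1)))) * (qp 2 (L + 1))⁻¹) := by ring
    _ = (qp 2 L)⁻¹ * (qp 2 (L + 1) * (qp 2 (L + 1))⁻¹) := by rw [← qp_succ]
    _ = (qp 2 L)⁻¹ := by rw [qp_mul_inv, mul_one]

lemma gbinom_out {m n : ℤ} (h : ¬(0 ≤ n ∧ n ≤ m)) : gbinom 2 m n = 0 := by
  rw [gbinom, if_neg h]

lemma gbinom_symm (m n : ℤ) (hm : 0 ≤ m) : gbinom 2 m n = gbinom 2 m (m - n) := by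
  unfold gbinom
  by_cases h : 0 ≤ n ∧ n ≤ m
  · rw [if_pos h, if_pos (by omega)]
    have h1 : (m - (m - n)).toNat = n.toNat := by omega
    rw [h1]
    ring
  · rw [if_neg h, if_neg (by omega)]

lemma gbinom_zero (m : ℤ) (hm : 0 ≤ m) : gbinom 2 m 0 = 1 := by
  rw [gbinom, if_pos (by omega)]
  simp only [Int.toNat_zero, Int.sub_zero, qp_zero_inv, mul_one]
  exact qp_mul_inv _

lemma gbinom_self (m : ℤ) (hm : 0 ≤ m) : gbinom 2 m m = 1 := by
  rw [gbinom, if_pos (by omega)]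
  simp only [Int.sub_self, Int.toNat_zero, qp_zero_inv, mul_one]
  exact qp_mul_inv _

/-- q-Pascal I: [m+1,n] = [m,n-1] + Q^n [m,n]. -/
lemma gbinom_pascal1 (m n : ℤ) (hm : 0 ≤ m) :
    gbinom 2 (m + 1) n = gbinom 2 m (n - 1) + X ^ (2 * n.toNat) * gbinom 2 m n := by
  rcases lt_or_ge n 0 with hn | hn
  · rw [gbinom_out (by omega), gbinom_out (by omega), gbinom_out (by omega)]
    ring
  rcases eq_or_lt_of_le hn with hn0 | hn1
  · rw [← hn0, gbinom_zero _ (by omega), gbinom_out (by omega), gbinom_zero _ hm]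
    simp
  rcases lt_or_ge m n with hbig | hle
  · rcases eq_or_lt_of_le (by omega : m + 1 ≤ n) with he | hs
    · have h2 : m + 1 - 1 = m := by ring
      rw [← he, h2, gbinom_self _ (by omega), gbinom_self _ hm,
        gbinom_out (show ¬(0 ≤ m + 1 ∧ m + 1 ≤ m) by omega)]
      simp
    · rw [gbinom_out (by omega), gbinom_out (by omega), gbinom_out (by omega)]
      ring
  -- main case: 1 ≤ n ≤ m
  obtain ⟨a', ha⟩ : ∃ a', n.toNat = a' + 1 := ⟨n.toNat - 1, by omega⟩
  obtain ⟨b', hb⟩ : ∃ b', (m + 1 - n).toNat = b' + 1 := ⟨(m + 1 - n).toNat - 1, by omega⟩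
  unfold gbinom
  rw [if_pos (by omega), if_pos (by omega), if_pos (by omega)]
  have e1 : (m + 1).toNat = (a' + 1) + (b' + 1) := by omega
  have e2 : (n - 1).toNat = a' := by omega
  have e3 : (m - (n - 1)).toNat = b' + 1 := by omega
  have e4 : (m - n).toNat = b' := by omega
  have e5 : m.toNat = a' + 1 + b' := by omega
  rw [e1, e2, e3, e4, e5, ha, hb]
  rw [qp_inv_pred a', qp_inv_pred b']
  have hmm : qp 2 (a' + 1 + (b' + 1)) = qp 2 (a' + 1 + b') * (1 - X ^ (2 * (a' + 1 + b' + 1))) := by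
    have h3 : a' + 1 + (b' + 1) = (a' + 1 + b') + 1 := by omega
    rw [h3, qp_succ]
  rw [hmm]
  ring

/-- q-Pascal II: [m+1,n] = Q^{m+1-n} [m,n-1] + [m,n]. -/
lemma gbinom_pascal2 (m n : ℤ) (hm : 0 ≤ m) :
    gbinom 2 (m + 1) n = X ^ (2 * (m + 1 - n).toNat) * gbinom 2 m (n - 1) + gbinom 2 m n := by
  rw [gbinom_symm (m + 1) n (by omega), gbinom_pascal1 m (m + 1 - n) hm]
  have h1 : m + 1 - n - 1 = m - n := by ring
  rw [h1, ← gbinom_symm m n hm, gbinom_symm m (m + 1 - n) hm]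
  have h2 : m - (m + 1 - n) = n - 1 := by ring
  rw [h2]
  ring

noncomputable def Rser (M : ℕ) (k : ℤ) : PowerSeries ℚ :=
  X ^ ((2 * k ^ 2 - k).toNat) * gbinom 2 M ((M / 2 : ℕ) + k)

lemma k_sq_le1 (k : ℤ) : k ≤ 2 * k ^ 2 := by nlinarith [sq_nonneg k, sq_nonneg (k - 1)]
lemma k_sq_le2 (k : ℤ) : -k ≤ 2 * k ^ 2 := by nlinarith [sq_nonneg k, sq_nonneg (k + 1)]

lemma Rser_zero (k : ℤ) : Rser 0 k = if k = 0 then 1 else 0 := by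
  unfold Rser
  by_cases hk : k = 0
  · subst hk
    simp only [if_pos rfl]
    norm_num
    exact gbinom_zero 0 le_rfl
  · rw [if_neg hk, gbinom_out (by push_cast; omega), mul_zero]

lemma Rser_rec (M : ℕ) (k : ℤ) :
    Rser (M + 1) k = Rser M k + X ^ (M + 1) * Rser M (((M + 1) % 2 : ℕ) - k) := by
  rcases Nat.even_or_odd M with ⟨N, hN⟩ | ⟨N, hN⟩
  · -- M = 2N, M+1 = 2N+1 odd, ε = 1
    subst hN
    have hd1 : ((N + N + 1) / 2 : ℕ) = N := by omega
    have hd2 : ((N + N) / 2 : ℕ) = N := by omega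
    have hm2 : ((N + N + 1) % 2 : ℕ) = 1 := by omega
    unfold Rser
    rw [hd1, hd2, hm2]
    simp only [Nat.cast_zero, Nat.cast_one]
    have hp : ((N + N : ℕ) : ℤ) + 1 = ((N + N : ℕ) : ℤ) + 1 := rfl
    have key := gbinom_pascal2 (N + N : ℕ) ((N : ℤ) + k) (by positivity)
    have harg : ((N + N : ℕ) : ℤ) + 1 = (((N + N + 1 : ℕ) : ℤ)) := by push_cast; ring
    rw [harg] at key
    rw [key]
    have hsym : gbinom 2 ((N + N : ℕ) : ℤ) ((N : ℤ) + (1 - k)) =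
        gbinom 2 ((N + N : ℕ) : ℤ) ((N : ℤ) + k - 1) := by
      rw [gbinom_symm _ _ (by positivity)]
      congr 1
      push_cast
      ring
    rw [hsym]
    rcases le_or_gt k ((N : ℤ) + 1) with hk | hk
    · -- exponent arithmetic case
      have e1 : (((N + N + 1 : ℕ) : ℤ) - ((N : ℤ) + k)).toNat = ((N : ℤ) + 1 - k).toNat := by
        push_cast; omega
      rw [e1]
      have h1 := k_sq_le1 k
      have h2 := k_sq_le2 k
      have h3 := k_sq_le1 (1 - k)
      have expo : (2 * k ^ 2 - k).toNat + 2 * ((N : ℤ) + 1 - k).toNat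
          = (N + N + 1) + (2 * (1 - k) ^ 2 - (1 - k)).toNat := by
        have hq : (1 - k) ^ 2 = k ^ 2 - 2 * k + 1 := by ring
        rw [hq] at h3 ⊢
        set s := k ^ 2 with hs
        omega
      calc X ^ (2 * k ^ 2 - k).toNat *
            (X ^ (2 * ((N:ℤ) + 1 - k).toNat) * gbinom 2 ((N + N : ℕ) : ℤ) ((N:ℤ) + k - 1) +
              gbinom 2 ((N + N : ℕ) : ℤ) ((N:ℤ) + k))
          = X ^ (2 * k ^ 2 - k).toNat * gbinom 2 ((N + N : ℕ) : ℤ) ((N:ℤ) + k) +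
            X ^ ((2 * k ^ 2 - k).toNat + 2 * ((N:ℤ) + 1 - k).toNat) *
              gbinom 2 ((N + N : ℕ) : ℤ) ((N:ℤ) + k - 1) := by
            rw [pow_add]; ring
        _ = _ := by rw [expo, pow_add]; ring
    · -- out of range : both extra terms vanish
      have hz : gbinom 2 ((N + N : ℕ) : ℤ) ((N : ℤ) + k - 1) = 0 := by
        apply gbinom_out; push_cast; omega
      rw [hz]
      ring
  · -- M = 2N+1, M+1 = 2N+2 even, ε = 0
    subst hN
    have hd1 : ((2 * N + 1 + 1) / 2 : ℕ) = N + 1 := by omega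
    have hd2 : ((2 * N + 1) / 2 : ℕ) = N := by omega
    have hm2 : ((2 * N + 1 + 1) % 2 : ℕ) = 0 := by omega
    unfold Rser
    rw [hd1, hd2, hm2]
    simp only [Nat.cast_zero, Nat.cast_one]
    have key := gbinom_pascal1 (2 * N + 1 : ℕ) ((N : ℤ) + 1 + k) (by positivity)
    have harg : ((2 * N + 1 : ℕ) : ℤ) + 1 = ((2 * N + 1 + 1 : ℕ) : ℤ) := by push_cast; ring
    rw [harg] at key
    have harg2 : (((N + 1 : ℕ)) : ℤ) + k = (N : ℤ) + 1 + k := by push_cast; ring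
    rw [harg2, key]
    have harg3 : (N : ℤ) + 1 + k - 1 = (N : ℤ) + k := by ring
    rw [harg3]
    have hsym : gbinom 2 ((2 * N + 1 : ℕ) : ℤ) ((N : ℤ) + (0 - k)) =
        gbinom 2 ((2 * N + 1 : ℕ) : ℤ) ((N : ℤ) + 1 + k) := by
      rw [gbinom_symm _ _ (by positivity)]
      congr 1
      push_cast
      ring
    rw [hsym]
    rcases le_or_gt (-(N : ℤ) - 1) k with hk | hk
    · have h1 := k_sq_le1 k
      have h2 := k_sq_le2 k
      have h3 := k_sq_le2 (0 - k)
      have expo : (2 * k ^ 2 - k).toNat + 2 * ((N : ℤ) + 1 + k).toNat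
          = (2 * N + 1 + 1) + (2 * (0 - k) ^ 2 - (0 - k)).toNat := by
        have hq : (0 - k) ^ 2 = k ^ 2 := by ring
        rw [hq]
        set s := k ^ 2 with hs
        omega
      calc X ^ (2 * k ^ 2 - k).toNat *
            (gbinom 2 ((2 * N + 1 : ℕ) : ℤ) ((N:ℤ) + k) +
              X ^ (2 * ((N:ℤ) + 1 + k).toNat) * gbinom 2 ((2 * N + 1 : ℕ) : ℤ) ((N:ℤ) + 1 + k))
          = X ^ (2 * k ^ 2 - k).toNat * gbinom 2 ((2 * N + 1 : ℕ) : ℤ) ((N:ℤ) + k) +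
            X ^ ((2 * k ^ 2 - k).toNat + 2 * ((N:ℤ) + 1 + k).toNat) *
              gbinom 2 ((2 * N + 1 : ℕ) : ℤ) ((N:ℤ) + 1 + k) := by
            rw [pow_add]; ring
        _ = _ := by rw [expo, pow_add]; ring
    · have hz : gbinom 2 ((2 * N + 1 : ℕ) : ℤ) ((N : ℤ) + 1 + k) = 0 := by
        apply gbinom_out; push_cast; omega
      rw [hz]
      ring

/-- Alternating parity sum. -/
def alt : List ℕ → ℤ
  | [] => 0
  | a :: t => (a % 2 : ℕ) - alt t

section rows

variable (μ : YoungDiagram)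

lemma cells_eq_biUnion : μ.cells = (Finset.range (μ.colLen 0)).biUnion μ.row := by
  ext c
  simp only [Finset.mem_biUnion, Finset.mem_range, YoungDiagram.mem_row_iff]
  constructor
  · intro hc
    refine ⟨c.1, ?_, ?_, rfl⟩
    · rw [← YoungDiagram.mem_iff_lt_colLen (j := 0)]
      exact μ.up_left_mem le_rfl (Nat.zero_le _) hc
    · exact hc
  · rintro ⟨a, _, hc, rfl⟩
    exact hc

lemma rows_disjoint {j1 j2 : ℕ} (h : j1 ≠ j2) : Disjoint (μ.row j1) (μ.row j2) := by
  rw [Finset.disjoint_left]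
  intro c h1 h2
  rw [YoungDiagram.mem_row_iff] at h1 h2
  exact h (h1.2 ▸ h2.2)

lemma card_cells_eq : μ.cells.card = μ.rowLens.sum := by
  rw [cells_eq_biUnion μ, Finset.card_biUnion (fun x _ y _ h => rows_disjoint μ h)]
  have : μ.rowLens.sum = ∑ j ∈ Finset.range (μ.colLen 0), μ.rowLen j := rfl
  rw [this]
  exact Finset.sum_congr rfl fun j _ => (μ.rowLen_eq_card (i := j)).symm

lemma filter_row (p : ℕ × ℕ → Prop) [DecidablePred p] (j : ℕ) :
    (μ.row j).filter p = {j} ×ˢ ((Finset.range (μ.rowLen j)).filter (fun (x : ℕ) => p (j, x))) := by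
  rw [YoungDiagram.row_eq_prod]
  ext ⟨a, b⟩
  simp only [Finset.mem_filter, Finset.mem_product, Finset.mem_singleton, Finset.mem_range]
  constructor
  · rintro ⟨⟨rfl, h2⟩, h3⟩
    exact ⟨rfl, h2, h3⟩
  · rintro ⟨rfl, h2, h3⟩
    exact ⟨⟨rfl, h2⟩, h3⟩

lemma rCount_eq (i : ZMod 2) : rCount μ 2 i =
    ∑ j ∈ Finset.range (μ.colLen 0),
      ((Finset.range (μ.rowLen j)).filter (fun (x : ℕ) => (x : ZMod 2) - (j : ZMod 2) = i)).card := by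
  unfold rCount
  rw [cells_eq_biUnion μ, Finset.filter_biUnion,
    Finset.card_biUnion]
  · apply Finset.sum_congr rfl
    intro j _
    rw [filter_row]
    simp [Finset.card_product]
  · intro x _ y _ h
    exact Finset.disjoint_filter_filter (rows_disjoint μ h)

lemma zmod_cond (x j : ℕ) : ((x : ZMod 2) - (j : ZMod 2)) = (((x + j) % 2 : ℕ) : ZMod 2) := by
  rw [ZMod.natCast_mod, Nat.cast_add, CharTwo.sub_eq_add]

lemma zmod_cond0 (x j : ℕ) : ((x : ZMod 2) - (j : ZMod 2) = 0) ↔ (x + j) % 2 = 0 := by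
  rw [zmod_cond]
  rcases Nat.mod_two_eq_zero_or_one (x + j) with h | h <;> rw [h] <;> simp

lemma zmod_cond1 (x j : ℕ) : ((x : ZMod 2) - (j : ZMod 2) = 1) ↔ (x + j) % 2 = 1 := by
  rw [zmod_cond]
  rcases Nat.mod_two_eq_zero_or_one (x + j) with h | h <;> rw [h] <;> simp

lemma rowdiff (j L : ℕ) :
    ((((Finset.range L).filter (fun (x : ℕ) => (x + j) % 2 = 0)).card : ℤ) -
      (((Finset.range L).filter (fun (x : ℕ) => (x + j) % 2 = 1)).card : ℤ)) =
      (if j % 2 = 0 then (L % 2 : ℤ) else -(L % 2 : ℤ)) := by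
  induction L with
  | zero => simp
  | succ L ih =>
    rw [Finset.range_add_one, Finset.filter_insert, Finset.filter_insert]
    rcases Nat.mod_two_eq_zero_or_one (L + j) with h | h
    · rw [if_pos h, if_neg (by omega), Finset.card_insert_of_notMem (by simp)]
      split_ifs at ih ⊢ <;> push_cast at ih ⊢ <;> omega
    · rw [if_neg (by omega), if_pos h, Finset.card_insert_of_notMem (by simp)]
      split_ifs at ih ⊢ <;> push_cast at ih ⊢ <;> omega

lemma bg_row (j L : ℕ) :
    ((((Finset.range L).filter (fun (x : ℕ) => (x : ZMod 2) - (j : ZMod 2) = 0)).card : ℤ) -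
      (((Finset.range L).filter (fun (x : ℕ) => (x : ZMod 2) - (j : ZMod 2) = 1)).card : ℤ)) =
      (if j % 2 = 0 then (L % 2 : ℤ) else -(L % 2 : ℤ)) := by
  have h0 : (Finset.range L).filter (fun (x : ℕ) => (x : ZMod 2) - (j : ZMod 2) = 0) =
      (Finset.range L).filter (fun (x : ℕ) => (x + j) % 2 = 0) :=
    Finset.filter_congr (fun x _ => by rw [zmod_cond0])
  have h1 : (Finset.range L).filter (fun (x : ℕ) => (x : ZMod 2) - (j : ZMod 2) = 1) =
      (Finset.range L).filter (fun (x : ℕ) => (x + j) % 2 = 1) :=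
    Finset.filter_congr (fun x _ => by rw [zmod_cond1])
  rw [h0, h1, rowdiff]

lemma bg_eq_sum :
    (rCount μ 2 (0 : ZMod 2) : ℤ) - (rCount μ 2 (1 : ZMod 2) : ℤ) =
      ∑ j ∈ Finset.range (μ.colLen 0),
        (if j % 2 = 0 then ((μ.rowLen j) % 2 : ℤ) else -((μ.rowLen j) % 2 : ℤ)) := by
  rw [rCount_eq μ 0, rCount_eq μ 1]
  push_cast
  rw [← Finset.sum_sub_distrib]
  exact Finset.sum_congr rfl fun j _ => bg_row j (μ.rowLen j)

lemma alt_eq_sum (l : List ℕ) :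
    alt l = ∑ j ∈ Finset.range l.length,
      (if j % 2 = 0 then ((l.getD j 0) % 2 : ℤ) else -((l.getD j 0) % 2 : ℤ)) := by
  induction l with
  | nil => simp [alt]
  | cons a t ih =>
    rw [List.length_cons, Finset.sum_range_succ' _ t.length]
    simp only [List.getD_cons_succ, List.getD_cons_zero, if_pos (by omega : (0:ℕ) % 2 = 0)]
    have : ∑ j ∈ Finset.range t.length,
        (if (j + 1) % 2 = 0 then ((t.getD j 0) % 2 : ℤ) else -((t.getD j 0) % 2 : ℤ)) =
        ∑ j ∈ Finset.range t.length,
          -(if j % 2 = 0 then ((t.getD j 0) % 2 : ℤ) else -((t.getD j 0) % 2 : ℤ)) := by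
      apply Finset.sum_congr rfl
      intro j _
      rcases Nat.mod_two_eq_zero_or_one j with hj | hj
      · rw [if_neg (by omega), if_pos hj]
      · rw [if_pos (by omega), if_neg (by omega), neg_neg]
    rw [this, Finset.sum_neg_distrib, ← ih]
    show alt (a :: t) = -alt t + ((a : ℤ) % 2)
    rw [alt]
    push_cast
    omega

lemma bg_eq : (rCount μ 2 (0 : ZMod 2) : ℤ) - (rCount μ 2 (1 : ZMod 2) : ℤ) = alt μ.rowLens := by
  rw [bg_eq_sum, alt_eq_sum]
  have hlen : μ.rowLens.length = μ.colLen 0 := YoungDiagram.length_rowLens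
  rw [hlen]
  apply Finset.sum_congr rfl
  intro j hj
  rw [Finset.mem_range] at hj
  have hget : μ.rowLens.getD j 0 = μ.rowLen j := by
    rw [List.getD_eq_getElem _ _ (by rw [hlen]; exact hj)]
    simp [YoungDiagram.rowLens, List.getElem_map, List.getElem_range]
  rw [hget]

lemma rowLen_pos {j : ℕ} (hj : j < μ.colLen 0) : 0 < μ.rowLen j := by
  have : (j, 0) ∈ μ := YoungDiagram.mem_iff_lt_colLen.2 hj
  exact Nat.pos_of_ne_zero fun h0 => by
    rw [YoungDiagram.mem_iff_lt_rowLen, h0] at this; omega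

lemma getElem_rowLens {j : ℕ} (h : j < μ.rowLens.length) : μ.rowLens[j] = μ.rowLen j := by
  simp [YoungDiagram.rowLens, List.getElem_map, List.getElem_range]

lemma mult_le_one_iff :
    (∀ m : ℕ, 1 ≤ m → mult μ m ≤ 1) ↔ μ.rowLens.Pairwise (· > ·) := by
  have hlen : μ.rowLens.length = μ.colLen 0 := YoungDiagram.length_rowLens
  constructor
  · intro h
    rw [List.pairwise_iff_getElem]
    intro i j hi hj hij
    rw [getElem_rowLens μ hi, getElem_rowLens μ hj]
    rcases lt_or_eq_of_le (μ.rowLen_anti i j (le_of_lt hij)) with hlt | heq2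
    · exact hlt
    · exfalso
      have hm := rowLen_pos μ (hlen ▸ hj)
      have h2 : 1 < ((Finset.range (μ.colLen 0)).filter (fun a => μ.rowLen a = μ.rowLen j)).card := by
        rw [Finset.one_lt_card]
        refine ⟨i, ?_, j, ?_, by omega⟩ <;>
          simp only [Finset.mem_filter, Finset.mem_range]
        · exact ⟨by omega, heq2.symm⟩
        · exact ⟨by omega, trivial⟩
      have := h (μ.rowLen j) hm
      unfold mult at this
      omega
  · intro h m hm
    unfold mult
    rw [Finset.card_le_one]
    intro a ha b hb
    simp only [Finset.mem_filter, Finset.mem_range] at ha hb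
    by_contra hne
    rw [List.pairwise_iff_getElem] at h
    rcases lt_or_gt_of_ne hne with hl | hl
    · have := h a b (by omega) (by omega) hl
      rw [getElem_rowLens μ, getElem_rowLens μ] at this
      omega
    · have := h b a (by omega) (by omega) hl
      rw [getElem_rowLens μ, getElem_rowLens μ] at this
      omega

lemma rowLen_le_iff (M : ℕ) : μ.rowLen 0 ≤ M ↔ ∀ x ∈ μ.rowLens, x ≤ M := by
  constructor
  · intro h x hx
    rw [YoungDiagram.rowLens, List.mem_map] at hx
    obtain ⟨j, _, rfl⟩ := hx
    exact le_trans (μ.rowLen_anti 0 j (Nat.zero_le j)) h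
  · intro h
    rcases Nat.eq_zero_or_pos (μ.colLen 0) with h0 | h0
    · have : μ.rowLen 0 = 0 := by
        by_contra hne
        have : (0, 0) ∈ μ := YoungDiagram.mem_iff_lt_rowLen.2 (by omega)
        rw [YoungDiagram.mem_iff_lt_colLen] at this
        omega
      omega
    · exact h _ (by
        rw [YoungDiagram.rowLens, List.mem_map]
        exact ⟨0, List.mem_range.2 h0, rfl⟩)

end rows

section finiteness

lemma cell_bound {μ : YoungDiagram} {c : ℕ × ℕ} (hc : c ∈ μ.cells) :
    c.1 < μ.cells.card ∧ c.2 < μ.cells.card := by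
  rw [YoungDiagram.mem_cells] at hc
  constructor
  · have h1 : c.1 < μ.colLen c.2 := YoungDiagram.mem_iff_lt_colLen.1 (by simpa using hc)
    have h2 : μ.colLen c.2 ≤ μ.cells.card := by
      rw [μ.colLen_eq_card]
      exact Finset.card_le_card (Finset.filter_subset _ _)
    omega
  · have h1 : c.2 < μ.rowLen c.1 := YoungDiagram.mem_iff_lt_rowLen.1 (by simpa using hc)
    have h2 : μ.rowLen c.1 ≤ μ.cells.card := by
      rw [μ.rowLen_eq_card]
      exact Finset.card_le_card (Finset.filter_subset _ _)
    omega

instance fin_subtype (n : ℕ) (P : YoungDiagram → Prop) :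
    Finite {μ : YoungDiagram // μ.cells.card = n ∧ P μ} := by
  classical
  have key : ∀ μ : {μ : YoungDiagram // μ.cells.card = n ∧ P μ},
      μ.1.cells ∈ (Finset.range n ×ˢ Finset.range n).powerset := by
    intro μ
    rw [Finset.mem_powerset]
    intro c hc
    have := cell_bound hc
    rw [μ.2.1] at this
    simp only [Finset.mem_product, Finset.mem_range]
    exact this
  apply Finite.of_injective
    (fun μ => (⟨μ.1.cells, key μ⟩ : {s // s ∈ (Finset.range n ×ˢ Finset.range n).powerset}))
  intro a b hab
  simp only [Subtype.mk.injEq] at hab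
  ext : 1
  apply le_antisymm <;> rw [← YoungDiagram.cells_subset_iff, hab]
end finiteness

def GoodL (M n : ℕ) (k : ℤ) (l : List ℕ) : Prop :=
  (l.Pairwise (· ≥ ·) ∧ ∀ x ∈ l, 0 < x) ∧
    (l.sum = n ∧ l.Pairwise (· > ·) ∧ (∀ x ∈ l, x ≤ M) ∧ alt l = k)

noncomputable def cnt (M n : ℕ) (k : ℤ) : ℕ := Nat.card {l : List ℕ // GoodL M n k l}

noncomputable def muEquiv (M n : ℕ) (k : ℤ) :
    {μ : YoungDiagram // μ.cells.card = n ∧ ((∀ m : ℕ, 1 ≤ m → mult μ m ≤ 1) ∧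
      μ.rowLen 0 ≤ M ∧
      ((rCount μ 2 (0 : ZMod 2) : ℤ) - (rCount μ 2 (1 : ZMod 2) : ℤ) = k))} ≃
    {l : List ℕ // GoodL M n k l} :=
  ((Equiv.subtypeEquiv (q := fun w : {w : List ℕ // w.SortedGE ∧ ∀ x ∈ w, 0 < x} =>
      w.1.sum = n ∧ w.1.Pairwise (· > ·) ∧ (∀ x ∈ w.1, x ≤ M) ∧ alt w.1 = k)
      YoungDiagram.equivListRowLens (fun μ => by
    show _ ↔ (μ.rowLens.sum = n ∧ μ.rowLens.Pairwise (· > ·) ∧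
      (∀ x ∈ μ.rowLens, x ≤ M) ∧ alt μ.rowLens = k)
    constructor
    · rintro ⟨hcard, hmult, hle, hbg⟩
      exact ⟨by rw [← card_cells_eq]; exact hcard, (mult_le_one_iff μ).1 hmult,
        (rowLen_le_iff μ M).1 hle, by rw [← bg_eq]; exact hbg⟩
    · rintro ⟨hsum, hsort, hle, halt⟩
      exact ⟨by rw [card_cells_eq]; exact hsum, (mult_le_one_iff μ).2 hsort,
        (rowLen_le_iff μ M).2 hle, by rw [bg_eq]; exact halt⟩)).trans
    (Equiv.subtypeSubtypeEquivSubtypeInter _ (fun l : List ℕ =>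
      l.sum = n ∧ l.Pairwise (· > ·) ∧ (∀ x ∈ l, x ≤ M) ∧ alt l = k))).trans
    (Equiv.subtypeEquivRight fun l => by unfold GoodL; rw [List.sortedGE_iff_pairwise])

instance (M n : ℕ) (k : ℤ) : Finite {l : List ℕ // GoodL M n k l} :=
  Finite.of_equiv _ (muEquiv M n k)

lemma good_head {M n : ℕ} {k : ℤ} {l : List ℕ} (hg : GoodL (M + 1) n k l)
    (hm : (M + 1) ∈ l) : l = (M + 1) :: l.tail := by
  obtain ⟨⟨hsort, _⟩, _, _, hle, _⟩ := hg
  cases l with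
  | nil => simp at hm
  | cons a t =>
    simp only [List.tail_cons]
    rcases List.mem_cons.1 hm with h1 | h1
    · rw [h1]
    · have h2 := (List.pairwise_cons.1 hsort).1 _ h1
      have h3 := hle a (by simp)
      have : a = M + 1 := by omega
      rw [this]

lemma tail_good {M n : ℕ} {k : ℤ} {l : List ℕ} (hg : GoodL (M + 1) n k l)
    (hm : (M + 1) ∈ l) :
    GoodL M (n - (M + 1)) ((((M + 1) % 2 : ℕ) : ℤ) - k) l.tail := by
  have hl := good_head hg hm
  rw [hl] at hg
  obtain ⟨⟨hsort, hpos⟩, hsum, hstrict, hle, halt⟩ := hg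
  refine ⟨⟨(List.pairwise_cons.1 hsort).2, fun x hx => hpos x (List.mem_cons_of_mem _ hx)⟩,
    ?_, (List.pairwise_cons.1 hstrict).2, ?_, ?_⟩
  · rw [List.sum_cons] at hsum
    omega
  · intro x hx
    have := (List.pairwise_cons.1 hstrict).1 _ hx
    omega
  · rw [show alt ((M + 1) :: l.tail) = (((M + 1) % 2 : ℕ) : ℤ) - alt l.tail from rfl] at halt
    omega

lemma cons_good {M n : ℕ} {k : ℤ} {t : List ℕ} (h : M + 1 ≤ n)
    (hg : GoodL M (n - (M + 1)) ((((M + 1) % 2 : ℕ) : ℤ) - k) t) :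
    GoodL (M + 1) n k ((M + 1) :: t) := by
  obtain ⟨⟨hsort, hpos⟩, hsum, hstrict, hle, halt⟩ := hg
  refine ⟨⟨List.pairwise_cons.2 ⟨fun b hb => le_trans (hle b hb) (by omega), hsort⟩,
    fun x hx => ?_⟩, ?_, List.pairwise_cons.2 ⟨fun b hb => by have := hle b hb; omega, hstrict⟩,
    fun x hx => ?_, ?_⟩
  · rcases List.mem_cons.1 hx with h1 | h1
    · omega
    · exact hpos x h1
  · rw [List.sum_cons, hsum]
    omega
  · rcases List.mem_cons.1 hx with h1 | h1
    · omega
    · have := hle x h1; omega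
  · rw [show alt ((M + 1) :: t) = (((M + 1) % 2 : ℕ) : ℤ) - alt t from rfl, halt]
    ring

def consEquiv (M n : ℕ) (k : ℤ) (h : M + 1 ≤ n) :
    {l : List ℕ // GoodL (M + 1) n k l ∧ (M + 1) ∈ l} ≃
    {t : List ℕ // GoodL M (n - (M + 1)) ((((M + 1) % 2 : ℕ) : ℤ) - k) t} where
  toFun x := ⟨x.1.tail, tail_good x.2.1 x.2.2⟩
  invFun y := ⟨(M + 1) :: y.1, cons_good h y.2, by simp⟩
  left_inv x := Subtype.ext (good_head x.2.1 x.2.2).symm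
  right_inv y := Subtype.ext rfl

lemma notmem_iff {M n : ℕ} {k : ℤ} {l : List ℕ} :
    GoodL (M + 1) n k l ∧ (M + 1) ∉ l ↔ GoodL M n k l := by
  constructor
  · rintro ⟨⟨h1, h2, h3, h4, h5⟩, hnm⟩
    refine ⟨h1, h2, h3, fun x hx => ?_, h5⟩
    have := h4 x hx
    rcases eq_or_lt_of_le this with he | hlt
    · exact absurd (he ▸ hx) hnm
    · omega
  · rintro ⟨h1, h2, h3, h4, h5⟩
    refine ⟨⟨h1, h2, h3, fun x hx => by have := h4 x hx; omega, h5⟩, fun hmem => ?_⟩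
    have := h4 _ hmem
    omega

lemma cnt_rec (M n : ℕ) (k : ℤ) :
    cnt (M + 1) n k = cnt M n k +
      (if M + 1 ≤ n then cnt M (n - (M + 1)) ((((M + 1) % 2 : ℕ) : ℤ) - k) else 0) := by
  classical
  have hsplit := Nat.card_congr
    (Equiv.sumCompl (fun x : {l : List ℕ // GoodL (M + 1) n k l} => (M + 1) ∈ x.1)).symm
  rw [Nat.card_sum] at hsplit
  have e1 : Nat.card {x : {l : List ℕ // GoodL (M + 1) n k l} // (M + 1) ∉ x.1} = cnt M n k :=
    Nat.card_congr ((Equiv.subtypeSubtypeEquivSubtypeInter _ _).trans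
      (Equiv.subtypeEquivRight fun l => notmem_iff))
  have e2 : Nat.card {x : {l : List ℕ // GoodL (M + 1) n k l} // (M + 1) ∈ x.1} =
      if M + 1 ≤ n then cnt M (n - (M + 1)) ((((M + 1) % 2 : ℕ) : ℤ) - k) else 0 := by
    split_ifs with hn
    · exact Nat.card_congr ((Equiv.subtypeSubtypeEquivSubtypeInter _ _).trans (consEquiv M n k hn))
    · have : IsEmpty {x : {l : List ℕ // GoodL (M + 1) n k l} // (M + 1) ∈ x.1} := by
        refine ⟨fun x => ?_⟩
        have hsum : x.1.1.sum = n := x.1.2.2.1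
        have hle := List.single_le_sum (l := x.1.1) (fun y _ => Nat.zero_le y) _ x.2
        omega
      exact Nat.card_of_isEmpty
  calc cnt (M + 1) n k = _ := hsplit
    _ = _ := by rw [e1, e2, Nat.add_comm]

lemma cnt_zero (n : ℕ) (k : ℤ) : cnt 0 n k = if n = 0 ∧ k = 0 then 1 else 0 := by
  have hnil : ∀ l : List ℕ, GoodL 0 n k l → l = [] := by
    intro l hg
    cases l with
    | nil => rfl
    | cons a t =>
      obtain ⟨⟨_, hpos⟩, _, _, hle, _⟩ := hg
      have h1 := hpos a (by simp)
      have h2 := hle a (by simp)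
      omega
  split_ifs with h
  · have : Unique {l : List ℕ // GoodL 0 n k l} :=
      { default := ⟨[], ⟨List.Pairwise.nil, by simp⟩, by simp [h.1], List.Pairwise.nil, by simp,
          by rw [show alt [] = 0 from rfl, h.2]⟩
        uniq := fun x => Subtype.ext (hnil x.1 x.2) }
    exact Nat.card_unique
  · have : IsEmpty {l : List ℕ // GoodL 0 n k l} := by
      refine ⟨fun x => ?_⟩
      have he := hnil x.1 x.2
      obtain ⟨_, hsum, _, _, halt⟩ := x.2
      rw [he] at hsum halt
      simp at hsum halt
      exact h ⟨hsum.symm, by rw [← halt]; rfl⟩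
    exact Nat.card_of_isEmpty

lemma GF_eq (M : ℕ) (k : ℤ) :
    GF (fun μ => (∀ m : ℕ, 1 ≤ m → mult μ m ≤ 1) ∧ μ.rowLen 0 ≤ M ∧
        (rCount μ 2 (0 : ZMod 2) : ℤ) - (rCount μ 2 (1 : ZMod 2) : ℤ) = k) =
      PowerSeries.mk fun n => (cnt M n k : ℚ) := by
  unfold GF
  apply congrArg PowerSeries.mk
  funext n
  exact congrArg Nat.cast (Nat.card_congr (muEquiv M n k))

lemma main_ind (M : ℕ) : ∀ k : ℤ, (PowerSeries.mk fun n => (cnt M n k : ℚ)) = Rser M k := by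
  induction M with
  | zero =>
    intro k
    by_cases hk : k = 0
    · subst hk
      rw [Rser_zero, if_pos rfl]
      ext n
      rw [coeff_mk, cnt_zero, PowerSeries.coeff_one]
      by_cases hn : n = 0 <;> simp [hn]
    · rw [Rser_zero, if_neg hk]
      ext n
      rw [coeff_mk, cnt_zero, if_neg (by tauto)]
      simp
  | succ M ih =>
    intro k
    rw [Rser_rec, ← ih k, ← ih ((((M + 1) % 2 : ℕ) : ℤ) - k)]
    ext n
    rw [map_add, coeff_mk, coeff_mk, PowerSeries.coeff_X_pow_mul', coeff_mk, cnt_rec]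
    push_cast
    split_ifs with h
    · ring
    · simp

/-- generating function for partitions into distinct parts ≤ 2N+ν with
BG-rank equal to k. -/
theorem genfn_distinct_bg_rank (N : ℕ) (k : ℤ) (ν : ℕ) (hν : ν ≤ 1) :
    GF (fun μ => (∀ m : ℕ, 1 ≤ m → mult μ m ≤ 1) ∧ μ.rowLen 0 ≤ 2 * N + ν ∧
        (rCount μ 2 (0 : ZMod 2) : ℤ) - (rCount μ 2 (1 : ZMod 2) : ℤ) = k) =
      (PowerSeries.X : PowerSeries ℚ) ^ ((2 * k ^ 2 - k).toNat) *
        qp 2 (2 * N + ν) *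
        qpi 2 ((N : ℤ) + ⌈(ν : ℚ) / 2⌉ - k) * qpi 2 ((N : ℤ) + k) := by
  rw [GF_eq, main_ind]
  unfold Rser
  have hdiv : ((2 * N + ν) / 2 : ℕ) = N := by omega
  have hceil : ⌈(ν : ℚ) / 2⌉ = (ν : ℤ) := by
    interval_cases ν <;> norm_num [Int.ceil_eq_iff]
  rw [hdiv, hceil]
  have h : gbinom 2 ((2 * N + ν : ℕ) : ℤ) ((N : ℤ) + k) =
      qp 2 (2 * N + ν) * qpi 2 ((N : ℤ) + (ν : ℤ) - k) * qpi 2 ((N : ℤ) + k) := by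
    unfold qpi
    by_cases h1 : 0 ≤ (N : ℤ) + k
    · by_cases h2 : 0 ≤ (N : ℤ) + (ν : ℤ) - k
      · rw [if_pos h1, if_pos h2, gbinom, if_pos (by push_cast; omega)]
        have e : ((2 * N + ν : ℕ) : ℤ) - ((N : ℤ) + k) = (N : ℤ) + (ν : ℤ) - k := by
          push_cast; ring
        rw [e, Int.toNat_natCast]
        ring
      · rw [gbinom_out (by push_cast; omega), if_pos h1, if_neg h2]
        ring
    · rw [if_neg h1, gbinom_out (by omega)]
      ring
  rw [h]
  ring
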